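/- arXiv:2110.01969 — 3 statements merged into one kernel-verified Lean document; each statement's English description precedes it below -/
import Mathlib

section
/- Let d ≥ 2, a ≥ -((d-2)/2)², μ_k = (d-2)/2 + k, ν_k = √(μ_k² + a), a_k = (μ_k + ν_k)/2 and b_k = (μ_k - ν_k)/2, regarded as smooth functions of the real variable k ≥ 1. Then |a_k| ≲ k, |da_k/dk| ≲ 1, |d^N a_k/dk^N| ≲ 1/k^N for 2 ≤ N ≤ ⌊(d-1)/2⌋ + 1, and |d^N b_k/dk^N| ≲ 1/k^{N+1} for 0 ≤ N ≤ ⌊(d-1)/2⌋ + 1. -/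
/-- `a_k = (μ_k + ν_k)/2` with `μ_k = (d-2)/2 + k`, `ν_k = √(μ_k² + a)`,
viewed as a function of the real variable `k`. -/
noncomputable def aFun (d : ℕ) (a : ℝ) (k : ℝ) : ℝ :=
  ((((d:ℝ) - 2)/2 + k) + Real.sqrt ((((d:ℝ) - 2)/2 + k)^2 + a)) / 2

/-- `b_k = (μ_k - ν_k)/2`, viewed as a function of the real variable `k`. -/
noncomputable def bFun (d : ℕ) (a : ℝ) (k : ℝ) : ℝ :=
  ((((d:ℝ) - 2)/2 + k) - Real.sqrt ((((d:ℝ) - 2)/2 + k)^2 + a)) / 2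

noncomputable def muF (d : ℕ) (k : ℝ) : ℝ := ((d:ℝ) - 2)/2 + k

noncomputable def nuF (d : ℕ) (a : ℝ) (k : ℝ) : ℝ := Real.sqrt (muF d k ^ 2 + a)

section basic
variable {d : ℕ} {a : ℝ}

lemma half_le_cast (hd : 2 ≤ d) : (0:ℝ) ≤ ((d:ℝ) - 2)/2 := by
  have : (2:ℝ) ≤ (d:ℝ) := by exact_mod_cast hd
  linarith

lemma mu_ge (hd : 2 ≤ d) {k : ℝ} (hk : 0 < k) : k ≤ muF d k := by
  have := half_le_cast hd; unfold muF; linarith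

lemma mu_pos (hd : 2 ≤ d) {k : ℝ} (hk : 0 < k) : 0 < muF d k :=
  lt_of_lt_of_le hk (mu_ge hd hk)

lemma nu_sq_arg_ge (hd : 2 ≤ d) (ha : -((((d:ℝ) - 2)/2)^2) ≤ a) {k : ℝ} (hk : 0 < k) :
    k^2 ≤ muF d k ^ 2 + a := by
  have h1 := half_le_cast hd
  unfold muF
  nlinarith [sq_nonneg (((d:ℝ)-2)/2)]

lemma nu_ge (hd : 2 ≤ d) (ha : -((((d:ℝ) - 2)/2)^2) ≤ a) {k : ℝ} (hk : 0 < k) :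
    k ≤ nuF d a k := by
  have h := nu_sq_arg_ge hd ha (a := a) hk
  have := Real.sqrt_le_sqrt h
  rwa [Real.sqrt_sq hk.le] at this

lemma nu_pos (hd : 2 ≤ d) (ha : -((((d:ℝ) - 2)/2)^2) ≤ a) {k : ℝ} (hk : 0 < k) :
    0 < nuF d a k := lt_of_lt_of_le hk (nu_ge hd ha hk)

lemma nu_sq (hd : 2 ≤ d) (ha : -((((d:ℝ) - 2)/2)^2) ≤ a) {k : ℝ} (hk : 0 < k) :
    nuF d a k ^ 2 = muF d k ^ 2 + a := by
  have h := nu_sq_arg_ge hd ha (a := a) hk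
  have h0 : 0 ≤ muF d k ^ 2 + a := le_trans (by positivity) h
  exact Real.sq_sqrt h0

lemma hasDerivAt_mu (k : ℝ) : HasDerivAt (muF d) 1 k := by
  exact (hasDerivAt_id' k).const_add (((d:ℝ) - 2)/2)

lemma hasDerivAt_nu (hd : 2 ≤ d) (ha : -((((d:ℝ) - 2)/2)^2) ≤ a) {k : ℝ} (hk : 0 < k) :
    HasDerivAt (nuF d a) (muF d k / nuF d a k) k := by
  have harg : HasDerivAt (fun k => muF d k ^ 2 + a) (2 * muF d k) k := by
    simpa using (((hasDerivAt_mu (d := d) k).pow 2).add_const a)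
  have hne : muF d k ^ 2 + a ≠ 0 := by
    exact ne_of_gt (lt_of_lt_of_le (by positivity) (nu_sq_arg_ge hd ha (a := a) hk))
  have := (Real.hasDerivAt_sqrt hne).comp k harg
  refine this.congr_deriv ?_
  unfold nuF
  rw [div_mul_eq_mul_div, one_mul, mul_div_mul_left _ _ two_ne_zero]

lemma mu_le (hd : 2 ≤ d) {k : ℝ} (hk : 1 ≤ k) : muF d k ≤ ((d:ℝ)/2) * k := by
  have h1 := half_le_cast hd
  have : ((d:ℝ)-2)/2 ≤ (((d:ℝ)-2)/2) * k := le_mul_of_one_le_right h1 hk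
  unfold muF; nlinarith

end basic

/-- Functions that are finite linear combinations of `μ^i ν^{-j}` with `i - j = z`. -/
inductive RepF (d : ℕ) (a : ℝ) : ℤ → (ℝ → ℝ) → Prop
  | base (i j : ℕ) : RepF d a ((i:ℤ) - (j:ℤ)) (fun k => muF d k ^ i * (nuF d a k)⁻¹ ^ j)
  | smul (c : ℝ) {z : ℤ} {f : ℝ → ℝ} : RepF d a z f → RepF d a z (fun k => c * f k)
  | add {z : ℤ} {f g : ℝ → ℝ} : RepF d a z f → RepF d a z g → RepF d a z (fun k => f k + g k)

lemma RepF.of_deg_eq {d : ℕ} {a : ℝ} {z z' : ℤ} {f : ℝ → ℝ} (h : RepF d a z f) (hz : z = z') :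
    RepF d a z' f := hz ▸ h

lemma RepF.congr_fun {d : ℕ} {a : ℝ} {z : ℤ} {f g : ℝ → ℝ} (h : RepF d a z f)
    (hfg : ∀ k, f k = g k) : RepF d a z g := by
  have : f = g := funext hfg
  exact this ▸ h

lemma RepF.zero (d : ℕ) (a : ℝ) (z : ℤ) : RepF d a z (fun _ => 0) := by
  rcases z with n | n
  · exact ((RepF.base (d := d) (a := a) n 0).smul 0).congr_fun (by intro k; simp) |>.of_deg_eq
      (by simp)
  · exact ((RepF.base (d := d) (a := a) 0 (n+1)).smul 0).congr_fun (by intro k; simp) |>.of_deg_eq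
      (by rw [Int.negSucc_eq]; push_cast; ring)

lemma RepF.bound {d : ℕ} {a : ℝ} (hd : 2 ≤ d) (ha : -((((d:ℝ) - 2)/2)^2) ≤ a)
    {z : ℤ} {f : ℝ → ℝ} (h : RepF d a z f) :
    ∃ C : ℝ, 0 < C ∧ ∀ k : ℝ, 1 ≤ k → |f k| ≤ C * k ^ z := by
  induction h with
  | base i j =>
    refine ⟨((d:ℝ)/2) ^ i, by positivity, fun k hk => ?_⟩
    have hk0 : (0:ℝ) < k := lt_of_lt_of_le one_pos hk
    have hμ0 : 0 < muF d k := mu_pos hd hk0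
    have hν : k ≤ nuF d a k := nu_ge hd ha hk0
    have hν0 : 0 < nuF d a k := lt_of_lt_of_le hk0 hν
    have h1 : muF d k ^ i ≤ (((d:ℝ)/2) * k) ^ i :=
      pow_le_pow_left₀ hμ0.le (mu_le hd hk) i
    have h2 : (nuF d a k)⁻¹ ^ j ≤ (k⁻¹) ^ j :=
      pow_le_pow_left₀ (by positivity) (inv_anti₀ hk0 hν) j
    have habs : |muF d k ^ i * (nuF d a k)⁻¹ ^ j| = muF d k ^ i * (nuF d a k)⁻¹ ^ j := by
      rw [abs_of_nonneg]; positivity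
    rw [habs]
    calc muF d k ^ i * (nuF d a k)⁻¹ ^ j ≤ (((d:ℝ)/2) * k) ^ i * (k⁻¹) ^ j := by
          apply mul_le_mul h1 h2 (by positivity) (by positivity)
      _ = ((d:ℝ)/2) ^ i * k ^ ((i:ℤ) - (j:ℤ)) := by
          rw [mul_pow, zpow_sub₀ (ne_of_gt hk0), zpow_natCast, zpow_natCast]
          field_simp
          rw [← mul_pow, one_div, inv_mul_cancel₀ (ne_of_gt hk0), one_pow]
  | @smul c z' f' h ih =>
    obtain ⟨C, hC, hb⟩ := ih
    refine ⟨|c| * C + 1, by positivity, fun k hk => ?_⟩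
    have hk0 : (0:ℝ) < k := lt_of_lt_of_le one_pos hk
    have h1 : |c * f' k| ≤ (|c| * C) * k ^ z' := by
      rw [abs_mul]
      exact (mul_le_mul_of_nonneg_left (hb k hk) (abs_nonneg c)).trans_eq (by ring)
    refine h1.trans ?_
    have h2 : (0:ℝ) < k ^ z' := zpow_pos hk0 _
    nlinarith [abs_nonneg c, hC]
  | add h1 h2 ih1 ih2 =>
    obtain ⟨C1, hC1, hb1⟩ := ih1
    obtain ⟨C2, hC2, hb2⟩ := ih2
    refine ⟨C1 + C2, by positivity, fun k hk => ?_⟩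
    exact (abs_add_le _ _).trans ((add_le_add (hb1 k hk) (hb2 k hk)).trans (le_of_eq (by ring)))

lemma RepF.deriv {d : ℕ} {a : ℝ} (hd : 2 ≤ d) (ha : -((((d:ℝ) - 2)/2)^2) ≤ a)
    {z : ℤ} {f : ℝ → ℝ} (h : RepF d a z f) :
    ∃ f' : ℝ → ℝ, RepF d a (z - 1) f' ∧ ∀ k : ℝ, 0 < k → HasDerivAt f (f' k) k := by
  induction h with
  | base i j =>
    have key : ∀ k : ℝ, 0 < k → HasDerivAt (fun y => muF d y ^ i * (nuF d a y)⁻¹ ^ j)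
        ((i:ℝ) * muF d k ^ (i-1) * 1 * (nuF d a k)⁻¹ ^ j
          + muF d k ^ i * ((j:ℝ) * (nuF d a k)⁻¹ ^ (j-1) *
            (-(muF d k / nuF d a k) / nuF d a k ^ 2))) k := by
      intro k hk
      have hνpos := nu_pos hd ha hk
      have hνinv : HasDerivAt (fun y => (nuF d a y)⁻¹)
          (-(muF d k / nuF d a k) / nuF d a k ^ 2) k :=
        (hasDerivAt_nu hd ha hk).inv hνpos.ne'
      exact ((hasDerivAt_mu k).pow i).mul (hνinv.pow j)
    match i, j with
    | 0, 0 =>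
      refine ⟨fun _ => 0, (RepF.zero d a _), fun k hk => ?_⟩
      simpa using hasDerivAt_const k (1:ℝ)
    | 0, j+1 =>
      refine ⟨fun k => (-((j:ℝ)+1)) * (muF d k ^ 1 * (nuF d a k)⁻¹ ^ (j+3)),
        ((RepF.base 1 (j+3)).smul _).of_deg_eq (by push_cast; ring), fun k hk => ?_⟩
      have := key k hk
      convert this using 1
      have hνpos := nu_pos hd ha hk
      simp only [Nat.add_sub_cancel, pow_zero, pow_one]
      field_simp
      have hν3 : nuF d a k ^ 3 * (nuF d a k)⁻¹ ^ 3 = 1 := by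
        rw [← mul_pow, mul_inv_cancel₀ hνpos.ne', one_pow]
      push_cast
      linear_combination (-(muF d k) * (nuF d a k)⁻¹ ^ j * (1 + (j:ℝ))) * hν3
    | i+1, 0 =>
      refine ⟨fun k => ((i:ℝ)+1) * (muF d k ^ i * (nuF d a k)⁻¹ ^ 0),
        ((RepF.base i 0).smul _).of_deg_eq (by push_cast; ring), fun k hk => ?_⟩
      have := key k hk
      convert this using 1
      simp only [Nat.add_sub_cancel, pow_zero]
      push_cast
      ring
    | i+1, j+1 =>
      have r1 : RepF d a ((i+1:ℕ) - (j+1:ℕ) - 1) (fun k => ((i:ℝ)+1) * (muF d k ^ i * (nuF d a k)⁻¹ ^ (j+1))) :=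
        ((RepF.base i (j+1)).smul _).of_deg_eq (by push_cast; ring)
      have r2 : RepF d a ((i+1:ℕ) - (j+1:ℕ) - 1) (fun k => (-((j:ℝ)+1)) * (muF d k ^ (i+2) * (nuF d a k)⁻¹ ^ (j+3))) :=
        ((RepF.base (i+2) (j+3)).smul _).of_deg_eq (by push_cast; ring)
      refine ⟨_, r1.add r2, fun k hk => ?_⟩
      have := key k hk
      convert this using 1
      have hνpos := nu_pos hd ha hk
      simp only [Nat.add_sub_cancel]
      field_simp
      have hν3 : nuF d a k ^ 3 * (nuF d a k)⁻¹ ^ 3 = 1 := by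
        rw [← mul_pow, mul_inv_cancel₀ hνpos.ne', one_pow]
      push_cast
      linear_combination (-(muF d k ^ 2 * muF d k ^ i * (nuF d a k)⁻¹ ^ j * (1 + (j:ℝ)))) * hν3
  | @smul c z' f' h ih =>
    obtain ⟨g, hg, hder⟩ := ih
    exact ⟨fun k => c * g k, hg.smul c, fun k hk => (hder k hk).const_mul c⟩
  | @add z' f₁ f₂ h1 h2 ih1 ih2 =>
    obtain ⟨g1, hg1, hder1⟩ := ih1
    obtain ⟨g2, hg2, hder2⟩ := ih2
    exact ⟨fun k => g1 k + g2 k, hg1.add hg2, fun k hk => (hder1 k hk).add (hder2 k hk)⟩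

noncomputable def fE (d : ℕ) (a ε : ℝ) (k : ℝ) : ℝ := (muF d k + ε * nuF d a k) / 2

lemma hasDerivAt_fE {d : ℕ} {a : ℝ} (hd : 2 ≤ d) (ha : -((((d:ℝ) - 2)/2)^2) ≤ a)
    (ε : ℝ) {k : ℝ} (hk : 0 < k) :
    HasDerivAt (fE d a ε) ((1 + ε * (muF d k / nuF d a k))/2) k := by
  exact ((hasDerivAt_mu (d := d) k).add ((hasDerivAt_nu hd ha hk).const_mul ε)).div_const 2

lemma hasDerivAt_fE_deriv {d : ℕ} {a : ℝ} (hd : 2 ≤ d) (ha : -((((d:ℝ) - 2)/2)^2) ≤ a)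
    (ε : ℝ) {k : ℝ} (hk : 0 < k) :
    HasDerivAt (fun k => (1 + ε * (muF d k / nuF d a k))/2)
      ((ε * a / 2) * (muF d k ^ 0 * (nuF d a k)⁻¹ ^ 3)) k := by
  have hνpos := nu_pos hd ha hk
  have hdiv : HasDerivAt (fun k => muF d k / nuF d a k)
      ((1 * nuF d a k - muF d k * (muF d k / nuF d a k)) / nuF d a k ^ 2) k :=
    (hasDerivAt_mu k).div (hasDerivAt_nu hd ha hk) hνpos.ne'
  have := ((hdiv.const_mul ε).const_add 1).div_const 2
  refine this.congr_deriv ?_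
  have hsq := nu_sq hd ha (a := a) hk
  field_simp
  linear_combination ε * hsq

lemma iter_fE {d : ℕ} {a : ℝ} (hd : 2 ≤ d) (ha : -((((d:ℝ) - 2)/2)^2) ≤ a) (ε : ℝ) (n : ℕ) :
    ∃ g : ℝ → ℝ, RepF d a (-((n:ℤ)+3)) g ∧
      ∀ k : ℝ, 0 < k → iteratedDeriv (n+2) (fE d a ε) k = g k := by
  induction n with
  | zero =>
    refine ⟨fun k => (ε * a / 2) * (muF d k ^ 0 * (nuF d a k)⁻¹ ^ 3),
      ((RepF.base 0 3).smul _).of_deg_eq (by norm_num), fun k hk => ?_⟩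
    have h1 : ∀ x : ℝ, x ∈ Set.Ioi (0:ℝ) → deriv (fE d a ε) x
        = (1 + ε * (muF d x / nuF d a x))/2 := fun x hx => (hasDerivAt_fE hd ha ε hx).deriv
    have h2 : deriv (fE d a ε) =ᶠ[nhds k] (fun x => (1 + ε * (muF d x / nuF d a x))/2) :=
      Filter.eventuallyEq_of_mem (Ioi_mem_nhds hk) h1
    rw [show (0:ℕ)+2 = 1+1 from rfl, iteratedDeriv_succ, iteratedDeriv_one, h2.deriv_eq]
    exact (hasDerivAt_fE_deriv hd ha ε hk).deriv
  | succ n ih =>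
    obtain ⟨g, hg, heq⟩ := ih
    obtain ⟨g', hg', hder⟩ := RepF.deriv hd ha hg
    refine ⟨g', hg'.of_deg_eq (by push_cast; ring), fun k hk => ?_⟩
    have h2 : iteratedDeriv (n+2) (fE d a ε) =ᶠ[nhds k] g :=
      Filter.eventuallyEq_of_mem (Ioi_mem_nhds hk) (fun x hx => heq x hx)
    rw [show n+1+2 = (n+2)+1 from rfl, iteratedDeriv_succ, h2.deriv_eq]
    exact (hder k hk).deriv

lemma unif_fE {d : ℕ} {a : ℝ} (hd : 2 ≤ d) (ha : -((((d:ℝ) - 2)/2)^2) ≤ a) (ε : ℝ) (M : ℕ) :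
    ∃ C : ℝ, 0 < C ∧ ∀ n ≤ M, ∀ k : ℝ, 1 ≤ k →
      |iteratedDeriv (n+2) (fE d a ε) k| ≤ C * k ^ (-((n:ℤ)+3)) := by
  induction M with
  | zero =>
    obtain ⟨g, hg, heq⟩ := iter_fE hd ha ε 0
    obtain ⟨C, hC, hb⟩ := RepF.bound hd ha hg
    refine ⟨C, hC, fun n hn k hk => ?_⟩
    interval_cases n
    rw [heq k (lt_of_lt_of_le one_pos hk)]
    exact hb k hk
  | succ M ih =>
    obtain ⟨C1, hC1, hb1⟩ := ih
    obtain ⟨g, hg, heq⟩ := iter_fE hd ha ε (M+1)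
    obtain ⟨C2, hC2, hb2⟩ := RepF.bound hd ha hg
    refine ⟨max C1 C2, lt_max_of_lt_left hC1, fun n hn k hk => ?_⟩
    have hk0 : (0:ℝ) < k := lt_of_lt_of_le one_pos hk
    have hkz : (0:ℝ) ≤ k ^ (-((n:ℤ)+3)) := (zpow_pos hk0 _).le
    rcases Nat.lt_or_ge n (M+1) with h | h
    · exact (hb1 n (Nat.lt_succ_iff.mp h) k hk).trans
        (mul_le_mul_of_nonneg_right (le_max_left _ _) hkz)
    · have hn' : n = M+1 := le_antisymm hn h
      subst hn'
      rw [heq k hk0]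
      exact (hb2 k hk).trans (mul_le_mul_of_nonneg_right (le_max_right _ _) hkz)


lemma aFun_eq_fE (d : ℕ) (a : ℝ) : aFun d a = fE d a 1 := by
  funext k; simp [aFun, fE, muF, nuF]

lemma bFun_eq_fE (d : ℕ) (a : ℝ) : bFun d a = fE d a (-1) := by
  funext k; simp [bFun, fE, muF, nuF]; ring

lemma bFun_eq_mu_nu (d : ℕ) (a : ℝ) (k : ℝ) :
    bFun d a k = (muF d k - nuF d a k) / 2 := rfl

lemma bFun_abs_le {d : ℕ} {a : ℝ} (hd : 2 ≤ d) (ha : -((((d:ℝ) - 2)/2)^2) ≤ a)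
    {k : ℝ} (hk : 1 ≤ k) : |bFun d a k| ≤ |a| / (4 * k) := by
  have hk0 : (0:ℝ) < k := lt_of_lt_of_le one_pos hk
  have hμ := mu_ge hd hk0
  have hν := nu_ge hd ha (a := a) hk0
  have hsum : (0:ℝ) < muF d k + nuF d a k := by linarith
  have hsq := nu_sq hd ha (a := a) hk0
  have hbe : bFun d a k = -a / (2 * (muF d k + nuF d a k)) := by
    rw [bFun_eq_mu_nu, eq_div_iff (by positivity)]
    linear_combination -hsq
  rw [hbe, abs_div, abs_neg]
  have h2 : |2 * (muF d k + nuF d a k)| = 2 * (muF d k + nuF d a k) := by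
    rw [abs_of_pos]; positivity
  rw [h2]
  apply div_le_div_of_nonneg_left (abs_nonneg a) (by positivity)
  linarith

set_option maxHeartbeats 2000000

/-- Estimates for `a_k`, `b_k` and their derivatives:
`|a_k| ≲ k`, `|a_k'| ≲ 1`, `|a_k^{(N)}| ≲ k^{-N}` for `2 ≤ N ≤ ⌊(d-1)/2⌋+1`, and
`|b_k^{(N)}| ≲ k^{-(N+1)}` for `0 ≤ N ≤ ⌊(d-1)/2⌋+1`. -/
theorem aFun_bFun_derivative_estimates (d : ℕ) (hd : 2 ≤ d) (a : ℝ)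
    (ha : -((((d:ℝ) - 2)/2)^2) ≤ a) :
    ∃ C : ℝ, 0 < C ∧ ∀ k : ℝ, 1 ≤ k →
      |aFun d a k| ≤ C * k ∧
      |deriv (aFun d a) k| ≤ C ∧
      (∀ N : ℕ, 2 ≤ N → N ≤ (d - 1)/2 + 1 →
        |iteratedDeriv N (aFun d a) k| ≤ C / k ^ N) ∧
      (∀ N : ℕ, N ≤ (d - 1)/2 + 1 →
        |iteratedDeriv N (bFun d a) k| ≤ C / k ^ (N + 1)) := by
  set M : ℕ := (d - 1)/2 + 1 with hM
  obtain ⟨Ca, hCa, hba⟩ := unif_fE hd ha 1 M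
  obtain ⟨Cb, hCb, hbb⟩ := unif_fE hd ha (-1) M
  have hd2 : (1:ℝ) ≤ (d:ℝ)/2 := by
    have : (2:ℝ) ≤ (d:ℝ) := by exact_mod_cast hd
    linarith
  refine ⟨(d:ℝ)/2 + |a| + 1 + Ca + Cb, by positivity, fun k hk => ?_⟩
  set C : ℝ := (d:ℝ)/2 + |a| + 1 + Ca + Cb with hC
  have hk0 : (0:ℝ) < k := lt_of_lt_of_le one_pos hk
  have hμpos := mu_pos hd hk0
  have hνk := nu_ge hd ha (a := a) hk0
  have hνpos : 0 < nuF d a k := lt_of_lt_of_le hk0 hνk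
  have hb0 := bFun_abs_le hd ha hk
  have haC : |a| ≤ C := by have : 0 ≤ |a| := abs_nonneg a; simp only [hC]; linarith
  refine ⟨?_, ?_, ?_, ?_⟩
  · -- |aFun| ≤ C * k
    have hab : aFun d a k = muF d k - bFun d a k := by
      simp [aFun, bFun, muF, nuF]; ring
    rw [hab]
    have h1 : |muF d k - bFun d a k| ≤ |muF d k| + |bFun d a k| := abs_sub _ _
    have h2 : |muF d k| = muF d k := abs_of_pos hμpos
    have h3 : muF d k ≤ ((d:ℝ)/2) * k := mu_le hd hk
    have h4 : |a| / (4 * k) ≤ |a| := by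
      rw [div_le_iff₀ (by positivity)]
      nlinarith [abs_nonneg a]
    have h5 : |a| ≤ |a| * k := le_mul_of_one_le_right (abs_nonneg a) hk
    calc |muF d k - bFun d a k| ≤ ((d:ℝ)/2) * k + |a| * k := by
          rw [h2] at h1; linarith
      _ ≤ C * k := by
          simp only [hC]; nlinarith [abs_nonneg a]
  · -- |deriv aFun| ≤ C
    have hder : deriv (aFun d a) k = (1 + 1 * (muF d k / nuF d a k))/2 := by
      rw [aFun_eq_fE]; exact (hasDerivAt_fE hd ha 1 hk0).deriv
    rw [hder]
    have hμν : muF d k - nuF d a k ≤ |a| / 2 := by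
      have : muF d k - nuF d a k = 2 * bFun d a k := by rw [bFun_eq_mu_nu]; ring
      have hb' : |a| / (4 * k) ≤ |a| / 4 := by
        apply div_le_div_of_nonneg_left (abs_nonneg a) (by norm_num)
        linarith
      have := (abs_le.mp hb0).2
      linarith
    have hq : muF d k / nuF d a k ≤ 1 + |a|/2 := by
      rw [div_le_iff₀ hνpos]
      nlinarith [abs_nonneg a]
    rw [abs_of_nonneg (by positivity)]
    simp only [one_mul, hC]
    linarith [abs_nonneg a]
  · -- higher derivatives of aFun
    intro N hN2 hNM
    obtain ⟨n, rfl⟩ : ∃ n, N = n + 2 := ⟨N - 2, by omega⟩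
    have hn : n ≤ M := by omega
    have := hba n hn k hk
    rw [aFun_eq_fE]
    refine this.trans ?_
    have hzp : k ^ (-((n:ℤ)+3)) = ((k:ℝ) ^ (n+3))⁻¹ := by
      rw [zpow_neg]
      norm_cast
    rw [hzp, le_div_iff₀ (pow_pos hk0 _)]
    have he : Ca * ((k:ℝ) ^ (n+3))⁻¹ * k ^ (n+2) = Ca / k := by
      rw [pow_succ]
      field_simp
    rw [he]
    have : Ca / k ≤ Ca := div_le_self hCa.le hk
    refine this.trans ?_
    simp only [hC]
    nlinarith [abs_nonneg a]
  · -- derivatives of bFun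
    intro N hNM
    match N with
    | 0 =>
      simp only [iteratedDeriv_zero]
      refine hb0.trans ?_
      rw [show (0:ℕ)+1 = 1 from rfl, pow_one, div_le_div_iff₀ (by positivity) hk0]
      simp only [hC]
      nlinarith [abs_nonneg a, hCa, hCb]
    | 1 =>
      rw [iteratedDeriv_one, bFun_eq_fE]
      have hder : deriv (fE d a (-1)) k = (1 + (-1) * (muF d k / nuF d a k))/2 :=
        (hasDerivAt_fE hd ha (-1) hk0).deriv
      rw [hder]
      have he : (1 + (-1) * (muF d k / nuF d a k))/2 = (- bFun d a k) / nuF d a k := by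
        rw [bFun_eq_mu_nu]
        field_simp
        ring
      rw [he, abs_div, abs_neg, abs_of_pos hνpos]
      have h1 : |bFun d a k| / nuF d a k ≤ (|a| / (4*k)) / k :=
        div_le_div₀ (by positivity) hb0 hk0 hνk
      refine h1.trans ?_
      rw [div_div, div_le_div_iff₀ (by positivity) (by positivity)]
      have hkk : k ^ (1+1) = k * k := by ring
      rw [hkk]
      nlinarith [abs_nonneg a, hCa, hCb, sq_nonneg k, mul_pos hk0 hk0]
    | (n+2) =>
      have hn : n ≤ M := by omega
      have := hbb n hn k hk
      rw [bFun_eq_fE]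
      refine this.trans ?_
      have hzp : k ^ (-((n:ℤ)+3)) = ((k:ℝ) ^ (n+3))⁻¹ := by
        rw [zpow_neg]
        norm_cast
      rw [hzp, le_div_iff₀ (pow_pos hk0 _)]
      have he : Cb * ((k:ℝ) ^ (n+3))⁻¹ * k ^ (n+2+1) = Cb := by
        field_simp
      rw [he, hC]
      linarith [abs_nonneg a, hCa]
end

section
/- Let (F_k)_{k≥0} and (G_k)_{k≥0} be bounded complex sequences, let N be a positive integer, and suppose sup_k k^m |Δ^m F_k| ≤ A for all 1 ≤ m ≤ N, and sup_j 2^{j(m-1)} Σ_{k=2^j}^{2^{j+1}} |Δ^m G_k| ≤ B for all 1 ≤ m ≤ N. Then the product sequence C_k = F_k G_k satisfies sup_j 2^{j(N-1)} Σ_{k=2^j}^{2^{j+1}} |Δ^N C_k| ≲_{N,A,B} 1. -/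
/-- Forward finite difference operator on complex sequences. -/
def fdC (s : ℕ → ℂ) : ℕ → ℂ := fun k => s (k + 1) - s k

lemma fdC_leibniz (F G : ℕ → ℂ) : ∀ (N k : ℕ),
    fdC^[N] (fun i => F i * G i) k =
      ∑ m ∈ Finset.range (N + 1),
        (N.choose m : ℂ) * fdC^[m] F (k + (N - m)) * fdC^[N - m] G k := by
  intro N
  induction N with
  | zero => intro k; simp [fdC]
  | succ N IH =>
    intro k
    rw [Function.iterate_succ_apply']
    show fdC^[N] (fun i => F i * G i) (k+1) - fdC^[N] (fun i => F i * G i) k = _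
    rw [IH (k+1), IH k, ← Finset.sum_sub_distrib]
    have key : ∀ m ∈ Finset.range (N + 1),
        (N.choose m : ℂ) * fdC^[m] F (k + 1 + (N - m)) * fdC^[N - m] G (k + 1) -
          (N.choose m : ℂ) * fdC^[m] F (k + (N - m)) * fdC^[N - m] G k =
        (N.choose m : ℂ) * fdC^[m] F (k + (N + 1 - m)) * fdC^[N + 1 - m] G k +
          (N.choose m : ℂ) * fdC^[m + 1] F (k + (N - m)) * fdC^[N - m] G k := by
      intro m hm
      have hmN : m ≤ N := Nat.lt_succ_iff.mp (Finset.mem_range.mp hm)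
      have h1 : k + 1 + (N - m) = k + (N + 1 - m) := by omega
      have h2 : N + 1 - m = (N - m) + 1 := by omega
      have h3 : fdC^[N + 1 - m] G k = fdC^[N - m] G (k + 1) - fdC^[N - m] G k := by
        rw [h2, Function.iterate_succ_apply']; rfl
      have h4 : fdC^[m + 1] F (k + (N - m)) =
          fdC^[m] F (k + (N - m) + 1) - fdC^[m] F (k + (N - m)) := by
        rw [Function.iterate_succ_apply']; rfl
      have h5 : k + (N - m) + 1 = k + (N + 1 - m) := by omega
      rw [h1, h3, h4, h5]
      set a := fdC^[m] F (k + (N + 1 - m)) with ha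
      set b := fdC^[m] F (k + (N - m)) with hb
      set c := fdC^[N - m] G (k + 1) with hc
      set d := fdC^[N - m] G k with hd
      ring
    rw [Finset.sum_congr rfl key, Finset.sum_add_distrib]
    -- Now Pascal shuffle
    set f : ℕ → ℂ := fun m => fdC^[m] F (k + (N + 1 - m)) * fdC^[N + 1 - m] G k with hf
    have hS1 : ∑ m ∈ Finset.range (N + 1),
        (N.choose m : ℂ) * fdC^[m] F (k + (N + 1 - m)) * fdC^[N + 1 - m] G k
        = ∑ m ∈ Finset.range (N + 1), (N.choose m : ℂ) * f m := by
      apply Finset.sum_congr rfl; intro m hm; rw [hf]; ring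
    have hS2 : ∑ m ∈ Finset.range (N + 1),
        (N.choose m : ℂ) * fdC^[m + 1] F (k + (N - m)) * fdC^[N - m] G k
        = ∑ m ∈ Finset.range (N + 1), (N.choose m : ℂ) * f (m + 1) := by
      apply Finset.sum_congr rfl; intro m hm
      have hmN : m ≤ N := Nat.lt_succ_iff.mp (Finset.mem_range.mp hm)
      have h1 : N + 1 - (m + 1) = N - m := by omega
      rw [hf]; simp only [h1]; ring
    rw [hS1, hS2]
    have hRHS : ∑ m ∈ Finset.range (N + 2),
        ((N + 1).choose m : ℂ) * fdC^[m] F (k + (N + 1 - m)) * fdC^[N + 1 - m] G k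
        = ∑ m ∈ Finset.range (N + 2), ((N + 1).choose m : ℂ) * f m := by
      apply Finset.sum_congr rfl; intro m hm; rw [hf]; ring
    rw [hRHS]
    -- goal : Σ_{range(N+1)} C(N,m) f m + Σ_{range(N+1)} C(N,m) f (m+1) = Σ_{range(N+2)} C(N+1,m) f m
    rw [Finset.sum_range_succ' (fun m => ((N + 1).choose m : ℂ) * f m) (N + 1)]
    simp only [Nat.choose_succ_succ, Nat.cast_add, add_mul, Nat.choose_zero_right, Nat.cast_one,
      one_mul]
    rw [Finset.sum_add_distrib]
    -- Σ C(N,m) f(m+1) + Σ C(N,m+1) f(m+1) + f 0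
    rw [Finset.sum_range_succ' (fun m => ((N).choose m : ℂ) * f m) N]
    simp only [Nat.choose_zero_right, Nat.cast_one, one_mul]
    have hlast : ∑ m ∈ Finset.range (N + 1), ((N.choose (m + 1)) : ℂ) * f (m + 1)
        = ∑ m ∈ Finset.range N, ((N.choose (m + 1)) : ℂ) * f (m + 1) := by
      rw [Finset.sum_range_succ, Nat.choose_succ_self, Nat.cast_zero, zero_mul, add_zero]
    rw [hlast]
    ring

/-- If `F` satisfies `sup_k k^m |Δ^m F_k| ≤ A` and `G` satisfies the dyadic bounds
`sup_j 2^{j(m-1)} Σ_{k=2^j}^{2^{j+1}} |Δ^m G_k| ≤ B` for `1 ≤ m ≤ N`, and both are bounded,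
then the product `C_k = F_k G_k` satisfies the dyadic bound of order `N`. -/
theorem product_finite_difference_dyadic (N : ℕ) (hN : 0 < N) (F G : ℕ → ℂ) (A B : ℝ)
    (hFbdd : ∀ k, ‖F k‖ ≤ A)
    (hGbdd : ∀ k, ‖G k‖ ≤ B)
    (hF : ∀ m : ℕ, 1 ≤ m → m ≤ N → ∀ k : ℕ, (k : ℝ) ^ m * ‖fdC^[m] F k‖ ≤ A)
    (hG : ∀ m : ℕ, 1 ≤ m → m ≤ N → ∀ j : ℕ,
      (2 : ℝ) ^ (j * (m - 1)) * ∑ k ∈ Finset.Icc (2 ^ j) (2 ^ (j + 1)), ‖fdC^[m] G k‖ ≤ B) :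
    ∃ K : ℝ, ∀ j : ℕ,
      (2 : ℝ) ^ (j * (N - 1)) *
        ∑ k ∈ Finset.Icc (2 ^ j) (2 ^ (j + 1)), ‖fdC^[N] (fun i => F i * G i) k‖ ≤ K := by
  have hA : 0 ≤ A := (norm_nonneg _).trans (hFbdd 0)
  have hB : 0 ≤ B := (norm_nonneg _).trans (hGbdd 0)
  refine ⟨(2 : ℝ) ^ (N + 1) * A * B, fun j => ?_⟩
  set S := Finset.Icc (2 ^ j : ℕ) (2 ^ (j + 1)) with hS
  -- pointwise bound on iterated differences of F on the dyadic block
  have hFpt : ∀ m : ℕ, 1 ≤ m → m ≤ N → ∀ k t : ℕ, 2 ^ j ≤ k →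
      ‖fdC^[m] F (k + t)‖ ≤ A / 2 ^ (j * m) := by
    intro m h1 h2 k t hk
    have h2p : (0 : ℝ) < 2 ^ (j * m) := by positivity
    rw [le_div_iff₀ h2p]
    have hkt : (2 : ℝ) ^ (j * m) ≤ ((k + t : ℕ) : ℝ) ^ m := by
      rw [pow_mul]
      apply pow_le_pow_left₀ (by positivity)
      have h2j : (2 : ℝ) ^ j ≤ (k : ℝ) := by exact_mod_cast hk
      have : ((k + t : ℕ) : ℝ) = (k : ℝ) + t := by push_cast; ring
      rw [this]
      linarith [Nat.cast_nonneg (α := ℝ) t]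
    calc ‖fdC^[m] F (k + t)‖ * 2 ^ (j * m)
        ≤ ‖fdC^[m] F (k + t)‖ * ((k + t : ℕ) : ℝ) ^ m :=
          mul_le_mul_of_nonneg_left hkt (norm_nonneg _)
      _ = ((k + t : ℕ) : ℝ) ^ m * ‖fdC^[m] F (k + t)‖ := mul_comm _ _
      _ ≤ A := hF m h1 h2 (k + t)
  -- dyadic sum bound for G
  have hGsum : ∀ m : ℕ, 1 ≤ m → m ≤ N →
      (∑ k ∈ S, ‖fdC^[m] G k‖) ≤ B / 2 ^ (j * (m - 1)) := by
    intro m h1 h2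
    rw [le_div_iff₀ (by positivity)]
    rw [mul_comm]
    exact hG m h1 h2 j
  -- key per-term estimate
  have key : ∀ m : ℕ, m ≤ N →
      (2 : ℝ) ^ (j * (N - 1)) *
        ∑ k ∈ S, ‖fdC^[m] F (k + (N - m))‖ * ‖fdC^[N - m] G k‖ ≤ 2 * A * B := by
    intro m hm
    rcases Nat.eq_zero_or_pos m with rfl | hm0
    · -- m = 0
      simp only [Function.iterate_zero, id, Nat.sub_zero]
      have step1 : ∑ k ∈ S, ‖F (k + N)‖ * ‖fdC^[N] G k‖ ≤
          A * ∑ k ∈ S, ‖fdC^[N] G k‖ := by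
        rw [Finset.mul_sum]
        apply Finset.sum_le_sum
        intro k _
        exact mul_le_mul_of_nonneg_right (hFbdd _) (norm_nonneg _)
      calc (2 : ℝ) ^ (j * (N - 1)) * ∑ k ∈ S, ‖F (k + N)‖ * ‖fdC^[N] G k‖
          ≤ (2 : ℝ) ^ (j * (N - 1)) * (A * ∑ k ∈ S, ‖fdC^[N] G k‖) :=
            mul_le_mul_of_nonneg_left step1 (by positivity)
        _ = A * ((2 : ℝ) ^ (j * (N - 1)) * ∑ k ∈ S, ‖fdC^[N] G k‖) := by ring
        _ ≤ A * B := mul_le_mul_of_nonneg_left (hG N hN le_rfl j) hA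
        _ ≤ 2 * A * B := by nlinarith
    · rcases eq_or_lt_of_le hm with rfl | hmN
      · -- m = N
        simp only [Nat.sub_self, Function.iterate_zero, id]
        have hcard : (S.card : ℝ) ≤ 2 ^ (j + 1) := by
          rw [hS, Nat.card_Icc]
          have : 2 ^ (j + 1) + 1 - 2 ^ j = 2 ^ j + 1 := by
            have := Nat.one_le_two_pow (n := j); omega
          rw [this]
          push_cast
          have : (1 : ℝ) ≤ 2 ^ j := one_le_pow₀ (by norm_num)
          rw [pow_succ]
          linarith
        have step1 : ∑ k ∈ S, ‖fdC^[m] F (k + 0)‖ * ‖G k‖ ≤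
            (S.card : ℝ) * (A / 2 ^ (j * m) * B) := by
          rw [← nsmul_eq_mul]
          apply Finset.sum_le_card_nsmul
          intro k hk
          have hk2 : 2 ^ j ≤ k := (Finset.mem_Icc.mp hk).1
          exact mul_le_mul (hFpt m hm0 le_rfl k 0 hk2) (hGbdd k) (norm_nonneg _)
            (by positivity)
        have hexp : j * m = j * (m - 1) + j := by
          have h2 : m - 1 + 1 = m := Nat.succ_pred_eq_of_pos hm0
          conv_lhs => rw [← h2]
          rw [Nat.mul_succ]
        calc (2 : ℝ) ^ (j * (m - 1)) * ∑ k ∈ S, ‖fdC^[m] F (k + 0)‖ * ‖G k‖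
            ≤ (2 : ℝ) ^ (j * (m - 1)) * ((S.card : ℝ) * (A / 2 ^ (j * m) * B)) :=
              mul_le_mul_of_nonneg_left step1 (by positivity)
          _ ≤ (2 : ℝ) ^ (j * (m - 1)) * ((2 : ℝ) ^ (j + 1) * (A / 2 ^ (j * m) * B)) := by
              apply mul_le_mul_of_nonneg_left _ (by positivity)
              apply mul_le_mul_of_nonneg_right hcard (by positivity)
          _ = 2 * A * B := by
              rw [hexp, pow_add, pow_succ]
              have h2p : (0 : ℝ) < 2 ^ (j * (m - 1)) := by positivity
              have h2q : (0 : ℝ) < 2 ^ j := by positivity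
              field_simp
              ring
      · -- 1 ≤ m < N
        have hGS : (∑ k ∈ S, ‖fdC^[N - m] G k‖) ≤ B / 2 ^ (j * (N - m - 1)) :=
          hGsum (N - m) (by omega) (by omega)
        have step1 : ∑ k ∈ S, ‖fdC^[m] F (k + (N - m))‖ * ‖fdC^[N - m] G k‖ ≤
            A / 2 ^ (j * m) * (B / 2 ^ (j * (N - m - 1))) := by
          calc ∑ k ∈ S, ‖fdC^[m] F (k + (N - m))‖ * ‖fdC^[N - m] G k‖
              ≤ ∑ k ∈ S, A / 2 ^ (j * m) * ‖fdC^[N - m] G k‖ := by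
                apply Finset.sum_le_sum
                intro k hk
                have hk2 : 2 ^ j ≤ k := (Finset.mem_Icc.mp hk).1
                exact mul_le_mul_of_nonneg_right (hFpt m hm0 hm k (N - m) hk2)
                  (norm_nonneg _)
            _ = A / 2 ^ (j * m) * ∑ k ∈ S, ‖fdC^[N - m] G k‖ := by
                rw [Finset.mul_sum]
            _ ≤ A / 2 ^ (j * m) * (B / 2 ^ (j * (N - m - 1))) :=
                mul_le_mul_of_nonneg_left hGS (by positivity)
        have hexp : j * (N - 1) = j * m + j * (N - m - 1) := by
          have h' : N - 1 = m + (N - m - 1) := by omega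
          rw [h', Nat.mul_add]
        calc (2 : ℝ) ^ (j * (N - 1)) *
              ∑ k ∈ S, ‖fdC^[m] F (k + (N - m))‖ * ‖fdC^[N - m] G k‖
            ≤ (2 : ℝ) ^ (j * (N - 1)) * (A / 2 ^ (j * m) * (B / 2 ^ (j * (N - m - 1)))) :=
              mul_le_mul_of_nonneg_left step1 (by positivity)
          _ = A * B := by
              rw [hexp, pow_add]
              have h2p : (0 : ℝ) < 2 ^ (j * m) := by positivity
              have h2q : (0 : ℝ) < 2 ^ (j * (N - m - 1)) := by positivity
              field_simp
          _ ≤ 2 * A * B := by nlinarith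
  -- assemble
  calc (2 : ℝ) ^ (j * (N - 1)) * ∑ k ∈ S, ‖fdC^[N] (fun i => F i * G i) k‖
      ≤ (2 : ℝ) ^ (j * (N - 1)) * ∑ k ∈ S, ∑ m ∈ Finset.range (N + 1),
          (N.choose m : ℝ) * (‖fdC^[m] F (k + (N - m))‖ * ‖fdC^[N - m] G k‖) := by
        apply mul_le_mul_of_nonneg_left _ (by positivity)
        apply Finset.sum_le_sum
        intro k _
        rw [fdC_leibniz]
        refine (norm_sum_le _ _).trans (le_of_eq ?_)
        apply Finset.sum_congr rfl
        intro m _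
        rw [norm_mul, norm_mul, Complex.norm_natCast]
        ring
    _ = ∑ m ∈ Finset.range (N + 1), (N.choose m : ℝ) *
          ((2 : ℝ) ^ (j * (N - 1)) *
            ∑ k ∈ S, ‖fdC^[m] F (k + (N - m))‖ * ‖fdC^[N - m] G k‖) := by
        rw [Finset.sum_comm, Finset.mul_sum]
        apply Finset.sum_congr rfl
        intro m _
        rw [← Finset.mul_sum, Finset.mul_sum, ← Finset.mul_sum]
        ring
    _ ≤ ∑ m ∈ Finset.range (N + 1), (N.choose m : ℝ) * (2 * A * B) := by
        apply Finset.sum_le_sum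
        intro m hm
        exact mul_le_mul_of_nonneg_left
          (key m (Nat.lt_succ_iff.mp (Finset.mem_range.mp hm)))
          (Nat.cast_nonneg _)
    _ = (2 : ℝ) ^ N * (2 * A * B) := by
        rw [← Finset.sum_mul]
        congr 1
        rw [← Nat.cast_sum]
        rw [Nat.sum_range_choose]
        push_cast
        ring
    _ = (2 : ℝ) ^ (N + 1) * A * B := by ring
end

section
/- Asymptotics of the hypergeometric function near z = 1: if a, b, c are complex with Re(c - a - b) < 0 and c, a, b are not nonpositive integers, then lim_{z→1⁻} (1-z)^{a+b-c} · ₂F₁(a, b; c; z) = Γ(c)Γ(a+b-c)/(Γ(a)Γ(b)). -/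
open Filter

/-- The Gauss hypergeometric function `₂F₁(a,b;c;z)`, defined via the Gauss series
`Σ_{n=0}^∞ (a)_n (b)_n / ((c)_n n!) z^n`, written with Gamma functions. -/
noncomputable def hyp2F1 (a b c : ℂ) (z : ℂ) : ℂ :=
  (Complex.Gamma c / (Complex.Gamma a * Complex.Gamma b)) *
    ∑' n : ℕ, Complex.Gamma (a + n) * Complex.Gamma (b + n) /
      (Complex.Gamma (c + n) * (n.factorial : ℂ)) * z ^ n

set_option maxHeartbeats 1000000

namespace H2F1

open Complex Finset

noncomputable def P (x : ℂ) (n : ℕ) : ℂ := ∏ j ∈ Finset.range n, (x + j)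

lemma P_zero (x : ℂ) : P x 0 = 1 := by simp [P]

lemma P_succ (x : ℂ) (n : ℕ) : P x (n + 1) = P x n * (x + n) :=
  Finset.prod_range_succ _ _

lemma P_ne_zero {x : ℂ} (hx : ∀ j : ℕ, x + j ≠ 0) (n : ℕ) : P x n ≠ 0 :=
  Finset.prod_ne_zero_iff.mpr fun j _ => hx j

lemma norm_P (x : ℂ) (n : ℕ) : ‖P x n‖ = ∏ j ∈ Finset.range n, ‖x + (j : ℂ)‖ := by
  simp [P]

lemma add_nat_ne_zero {x : ℂ} (hx : ∀ m : ℕ, x ≠ -m) (j : ℕ) : x + (j : ℂ) ≠ 0 := by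
  intro h
  exact hx j (by linear_combination h)

lemma Gamma_add_nat {x : ℂ} (hx : ∀ m : ℕ, x ≠ -m) (n : ℕ) :
    Complex.Gamma (x + n) = P x n * Complex.Gamma x := by
  induction n with
  | zero => simp [P_zero]
  | succ n ih =>
      have hxn : x + (n : ℂ) ≠ 0 := add_nat_ne_zero hx n
      have h1 : x + ((n + 1 : ℕ) : ℂ) = (x + n) + 1 := by push_cast; ring
      rw [h1, Complex.Gamma_add_one _ hxn, ih, P_succ]
      ring

noncomputable def g (x : ℂ) (n : ℕ) : ℂ := P x n / n.factorial

lemma g_zero (x : ℂ) : g x 0 = 1 := by simp [g, P_zero]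

lemma g_succ (x : ℂ) (n : ℕ) : ((n : ℂ) + 1) * g x (n + 1) = (x + n) * g x n := by
  have h1 : (((n + 1).factorial : ℕ) : ℂ) = ((n : ℂ) + 1) * (n.factorial : ℂ) := by
    rw [Nat.factorial_succ]; push_cast; ring
  have h2 : ((n.factorial : ℕ) : ℂ) ≠ 0 := Nat.cast_ne_zero.mpr n.factorial_ne_zero
  have h3 : ((n : ℂ) + 1) ≠ 0 := Nat.cast_add_one_ne_zero n
  rw [g, g, P_succ, h1]
  field_simp

lemma tendsto_inv_nat_cast : Tendsto (fun n : ℕ => ((n : ℂ) + 1)⁻¹) atTop (nhds 0) := by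
  rw [tendsto_zero_iff_norm_tendsto_zero]
  have : (fun n : ℕ => ‖((n : ℂ) + 1)⁻¹‖) = fun n : ℕ => 1 / ((n : ℝ) + 1) := by
    funext n
    rw [norm_inv]
    have : ((n : ℂ) + 1) = (((n : ℝ) + 1 : ℝ) : ℂ) := by push_cast; ring
    rw [this, Complex.norm_real]
    rw [Real.norm_of_nonneg (by positivity), one_div]
  rw [this]
  exact tendsto_one_div_add_atTop_nhds_zero_nat

lemma ratio_algebra (A B u v w r : ℝ) (hA : A ≠ 0) (hu : u ≠ 0) (hw : w ≠ 0) :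
    (v * (A * (B / u)) * (w * r)) / (u * A * w) = v / u * (B / u) * r := by
  field_simp

lemma g_ne_zero {x : ℂ} (hx : ∀ j : ℕ, x + j ≠ 0) (n : ℕ) : g x n ≠ 0 :=
  div_ne_zero (P_ne_zero hx n) (Nat.cast_ne_zero.mpr n.factorial_ne_zero)

lemma norm_g_succ (x : ℂ) (n : ℕ) :
    ‖g x (n + 1)‖ = ‖g x n‖ * (‖x + n‖ / ((n : ℝ) + 1)) := by
  have h1 : ((n + 1).factorial : ℂ) = (((n : ℝ) + 1 : ℝ) : ℂ) * (n.factorial : ℂ) := by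
    rw [Nat.factorial_succ]; push_cast; ring
  have hf : ((n.factorial : ℝ)) ≠ 0 := by positivity
  have hn1 : ((n : ℝ) + 1) ≠ 0 := by positivity
  rw [g, g, P_succ, h1, norm_div, norm_mul, norm_mul, Complex.norm_real,
    Real.norm_of_nonneg (by positivity : (0:ℝ) ≤ (n : ℝ) + 1), Complex.norm_natCast, norm_div,
    Complex.norm_natCast]
  field_simp

/-- ratio `‖x+n‖/(n+1)` tends to 1 -/
lemma tendsto_ratio_norm (x : ℂ) :
    Tendsto (fun n : ℕ => ‖x + n‖ / ((n : ℝ) + 1)) atTop (nhds 1) := by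
  have key : ∀ n : ℕ, ‖x + n‖ / ((n : ℝ) + 1) = ‖1 + (x - 1) * ((n : ℂ) + 1)⁻¹‖ := by
    intro n
    have hn : ((n : ℂ) + 1) ≠ 0 := Nat.cast_add_one_ne_zero n
    have h : (1 : ℂ) + (x - 1) * ((n : ℂ) + 1)⁻¹ = (x + n) / ((n : ℂ) + 1) := by
      field_simp; ring
    rw [h, norm_div]
    congr 1
    have h2 : ((n : ℂ) + 1) = (((n : ℝ) + 1 : ℝ) : ℂ) := by push_cast; ring
    rw [h2, Complex.norm_real, Real.norm_of_nonneg (by positivity)]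
  simp only [key]
  have h0 : Tendsto (fun n : ℕ => (1 : ℂ) + (x - 1) * ((n : ℂ) + 1)⁻¹) atTop (nhds 1) := by
    have := (tendsto_inv_nat_cast.const_mul (x - 1)).const_add (1 : ℂ)
    simpa using this
  have := h0.norm
  simpa using this

/-- Master summability: `(n+1) ‖g x n‖ rⁿ` is summable for `0 < r < 1`. -/
lemma summable_master {x : ℂ} (hx : ∀ j : ℕ, x + j ≠ 0) {r : ℝ} (hr0 : 0 < r) (hr1 : r < 1) :
    Summable (fun n : ℕ => ((n : ℝ) + 1) * ‖g x n‖ * r ^ n) := by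
  have hpos : ∀ n : ℕ, 0 < ((n : ℝ) + 1) * ‖g x n‖ * r ^ n := by
    intro n
    have : 0 < ‖g x n‖ := norm_pos_iff.mpr (g_ne_zero hx n)
    positivity
  apply summable_of_ratio_test_tendsto_lt_one hr1
  · exact Eventually.of_forall fun n => (hpos n).ne'
  · have hratio : ∀ n : ℕ,
        ‖((((n + 1 : ℕ)) : ℝ) + 1) * ‖g x (n + 1)‖ * r ^ (n + 1)‖ /
          ‖((n : ℝ) + 1) * ‖g x n‖ * r ^ n‖ =
        (((n : ℝ) + 2) / ((n : ℝ) + 1)) * (‖x + n‖ / ((n : ℝ) + 1)) * r := by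
      intro n
      have hc : (((n + 1 : ℕ)) : ℝ) + 1 = (n : ℝ) + 2 := by push_cast; ring
      rw [hc, Real.norm_of_nonneg (by positivity), Real.norm_of_nonneg (hpos n).le,
        norm_g_succ, pow_succ]
      exact ratio_algebra _ _ _ _ _ _ (norm_ne_zero_iff.mpr (g_ne_zero hx n))
        (by positivity) (by positivity)
    have goal : Tendsto (fun n : ℕ =>
        (((n : ℝ) + 2) / ((n : ℝ) + 1)) * (‖x + n‖ / ((n : ℝ) + 1)) * r) atTop (nhds r) := by
      have hA : Tendsto (fun n : ℕ => ((n : ℝ) + 2) / ((n : ℝ) + 1)) atTop (nhds 1) := by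
        have key : ∀ n : ℕ, ((n : ℝ) + 2) / ((n : ℝ) + 1) = 1 + 1 / ((n : ℝ) + 1) := by
          intro n
          have : ((n : ℝ) + 1) ≠ 0 := by positivity
          field_simp
          ring
        simp only [key]
        have := tendsto_one_div_add_atTop_nhds_zero_nat.const_add (1 : ℝ)
        simpa using this
      have := (hA.mul (tendsto_ratio_norm x)).mul_const r
      simpa using this
    exact goal.congr fun n => (hratio n).symm

lemma summable_g_norm {x : ℂ} (hx : ∀ j : ℕ, x + j ≠ 0) {t : ℝ} (ht : |t| < 1) :
    Summable (fun n : ℕ => ‖g x n * (t : ℂ) ^ n‖) := by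
  set r := (|t| + 1) / 2 with hrdef
  have hr0 : (0 : ℝ) < r := by positivity
  have htr : |t| ≤ r := by rw [hrdef]; linarith
  have hr1 : r < 1 := by rw [hrdef]; linarith
  refine Summable.of_nonneg_of_le (fun n => norm_nonneg _) (fun n => ?_)
    (summable_master hx hr0 hr1)
  rw [norm_mul, norm_pow, Complex.norm_real, Real.norm_eq_abs]
  calc ‖g x n‖ * |t| ^ n ≤ ‖g x n‖ * r ^ n := by
        apply mul_le_mul_of_nonneg_left (pow_le_pow_left₀ (abs_nonneg t) htr n) (norm_nonneg _)
    _ ≤ ((n : ℝ) + 1) * ‖g x n‖ * r ^ n := by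
        have h2 := mul_nonneg (mul_nonneg (Nat.cast_nonneg (α := ℝ) n)
          (norm_nonneg (g x n))) (pow_nonneg hr0.le n)
        nlinarith

lemma summable_g {x : ℂ} (hx : ∀ j : ℕ, x + j ≠ 0) {t : ℝ} (ht : |t| < 1) :
    Summable (fun n : ℕ => g x n * (t : ℂ) ^ n) :=
  (summable_g_norm hx ht).of_norm

lemma d_bound {x : ℂ} {r : ℝ} (hr0 : 0 < r) {z : ℝ} (hz : |z| ≤ r) (n : ℕ) :
    ‖(n : ℂ) * g x n * (z : ℂ) ^ (n - 1)‖ ≤ r⁻¹ * (((n : ℝ) + 1) * ‖g x n‖ * r ^ n) := by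
  cases n with
  | zero =>
      simp only [Nat.cast_zero, zero_mul, norm_zero]
      have : 0 ≤ ‖g x 0‖ := norm_nonneg _
      positivity
  | succ k =>
      have hc : ‖((k + 1 : ℕ) : ℂ)‖ = (k : ℝ) + 1 := by
        rw [Complex.norm_natCast]; push_cast; ring
      rw [norm_mul, norm_mul, norm_pow, Complex.norm_real, Real.norm_eq_abs, hc,
        Nat.add_sub_cancel]
      have h1 : |z| ^ k ≤ r ^ k := pow_le_pow_left₀ (abs_nonneg z) hz k
      have h2 : ((k : ℝ) + 1) * ‖g x (k + 1)‖ * |z| ^ k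
          ≤ ((k : ℝ) + 1) * ‖g x (k + 1)‖ * r ^ k := by
        apply mul_le_mul_of_nonneg_left h1
        positivity
      refine h2.trans ?_
      have hk : (((k + 1 : ℕ)) : ℝ) + 1 = (k : ℝ) + 2 := by push_cast; ring
      rw [hk, pow_succ]
      have heq : r⁻¹ * (((k : ℝ) + 2) * ‖g x (k + 1)‖ * (r ^ k * r))
          = ((k : ℝ) + 2) * ‖g x (k + 1)‖ * r ^ k := by
        field_simp
      rw [heq]
      have h3 := mul_nonneg (norm_nonneg (g x (k + 1))) (pow_nonneg hr0.le k)
      nlinarith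

lemma hasDerivAt_S {x : ℂ} (hx : ∀ j : ℕ, x + j ≠ 0) {y : ℝ} (hy : |y| < 1) :
    HasDerivAt (fun z : ℝ => ∑' n : ℕ, g x n * (z : ℂ) ^ n)
      (∑' n : ℕ, (n : ℂ) * g x n * (y : ℂ) ^ (n - 1)) y := by
  set r := (|y| + 1) / 2 with hrdef
  have hr0 : (0 : ℝ) < r := by positivity
  have hyr : |y| < r := by rw [hrdef]; linarith
  have hr1 : r < 1 := by rw [hrdef]; linarith
  refine hasDerivAt_tsum_of_isPreconnected
    (u := fun n : ℕ => r⁻¹ * (((n : ℝ) + 1) * ‖g x n‖ * r ^ n))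
    (g := fun (n : ℕ) (z : ℝ) => g x n * (z : ℂ) ^ n)
    (g' := fun (n : ℕ) (z : ℝ) => (n : ℂ) * g x n * (z : ℂ) ^ (n - 1))
    (t := Set.Ioo (-r) r) (y₀ := 0)
    ((summable_master hx hr0 hr1).mul_left r⁻¹) isOpen_Ioo isPreconnected_Ioo
    (fun n z _ => ?_) (fun n z hz => ?_)
    (Set.mem_Ioo.mpr ⟨neg_lt_zero.mpr hr0, hr0⟩) ?_ (Set.mem_Ioo.mpr (abs_lt.mp hyr))
  · have h1 : HasDerivAt (fun w : ℝ => (w : ℂ) ^ n) ((n : ℂ) * (z : ℂ) ^ (n - 1)) z :=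
      (hasDerivAt_pow n ((z : ℂ))).comp_ofReal
    have := h1.const_mul (g x n)
    exact this.congr_deriv (by ring)
  · have hz' : |z| ≤ r := by
      rw [abs_le]
      exact ⟨(Set.mem_Ioo.mp hz).1.le, (Set.mem_Ioo.mp hz).2.le⟩
    exact d_bound hr0 hz' n
  · exact summable_g hx (by simp : |(0 : ℝ)| < 1)

lemma ode {x : ℂ} (hx : ∀ j : ℕ, x + j ≠ 0) {y : ℝ} (hy : |y| < 1) :
    (1 - (y : ℂ)) * ∑' n : ℕ, (n : ℂ) * g x n * (y : ℂ) ^ (n - 1)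
      = x * ∑' n : ℕ, g x n * (y : ℂ) ^ n := by
  set r := (|y| + 1) / 2 with hrdef
  have hr0 : (0 : ℝ) < r := by positivity
  have hyr : |y| ≤ r := by rw [hrdef]; linarith
  have hr1 : r < 1 := by rw [hrdef]; linarith
  have hS : Summable (fun n : ℕ => g x n * (y : ℂ) ^ n) := summable_g hx hy
  have hD : Summable (fun n : ℕ => (n : ℂ) * g x n * (y : ℂ) ^ (n - 1)) :=
    Summable.of_norm_bounded ((summable_master hx hr0 hr1).mul_left r⁻¹)
      (fun n => d_bound hr0 hyr n)
  have shift : (∑' n : ℕ, (n : ℂ) * g x n * (y : ℂ) ^ (n - 1))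
      = ∑' n : ℕ, (x + n) * (g x n * (y : ℂ) ^ n) := by
    rw [Summable.tsum_eq_zero_add hD]
    have h00 : ((0 : ℕ) : ℂ) * g x 0 * (y : ℂ) ^ (0 - 1) = 0 := by simp
    rw [h00, zero_add]
    refine tsum_congr fun n => ?_
    have hc : ((n + 1 : ℕ) : ℂ) = (n : ℂ) + 1 := by push_cast; ring
    have hcalc : ((n + 1 : ℕ) : ℂ) * g x (n + 1) * (y : ℂ) ^ ((n + 1) - 1)
        = (((n : ℂ) + 1) * g x (n + 1)) * (y : ℂ) ^ n := by
      rw [hc, Nat.add_sub_cancel]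
    rw [hcalc, g_succ]
    ring
  have split : (fun n : ℕ => (x + n) * (g x n * (y : ℂ) ^ n))
      = fun n : ℕ => x * (g x n * (y : ℂ) ^ n)
        + (y : ℂ) * ((n : ℂ) * g x n * (y : ℂ) ^ (n - 1)) := by
    funext n
    cases n with
    | zero => simp
    | succ k =>
        rw [Nat.add_sub_cancel, pow_succ]
        push_cast
        ring
  rw [split] at shift
  rw [Summable.tsum_add (hS.mul_left x) (hD.mul_left ((y : ℂ))), tsum_mul_left, tsum_mul_left] at shift
  linear_combination shift

lemma hasSum_binomial {x : ℂ} (hx : ∀ j : ℕ, x + j ≠ 0) {t : ℝ} (h0 : 0 ≤ t) (h1 : t < 1) :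
    HasSum (fun n : ℕ => g x n * (t : ℂ) ^ n) ((1 - (t : ℂ)) ^ (-x)) := by
  have habs : |t| < 1 := abs_lt.mpr ⟨by linarith, h1⟩
  have hS : Summable (fun n : ℕ => g x n * (t : ℂ) ^ n) := summable_g hx habs
  set Φ : ℝ → ℂ := fun z => (1 - (z : ℂ)) ^ x * ∑' n : ℕ, g x n * (z : ℂ) ^ n with hΦdef
  have key : ∀ z : ℝ, 0 ≤ z → z < 1 → HasDerivAt Φ 0 z := by
    intro z hz0 hz1
    have habsz : |z| < 1 := abs_lt.mpr ⟨by linarith, hz1⟩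
    have hrepos : (0 : ℝ) < 1 - z := by linarith
    have hmem : (1 - (z : ℂ)) ∈ Complex.slitPlane := by
      rw [Complex.mem_slitPlane_iff]
      left
      simp [Complex.sub_re]
      linarith
    have hne : (1 - (z : ℂ)) ≠ 0 := by
      intro hcon
      have : (1 - (z : ℂ)).re = 0 := by rw [hcon]; simp
      simp [Complex.sub_re] at this
      linarith
    have hC : HasDerivAt (fun w : ℝ => (1 - (w : ℂ)) ^ x)
        (x * (1 - (z : ℂ)) ^ (x - 1) * (-1)) z := by
      have hw : HasDerivAt (fun w : ℂ => (1 - w) ^ x)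
          (x * (1 - (z : ℂ)) ^ (x - 1) * (-1)) ((z : ℝ) : ℂ) :=
        HasDerivAt.cpow_const ((hasDerivAt_id ((z : ℝ) : ℂ)).const_sub 1) hmem
      exact hw.comp_ofReal
    have hD := hasDerivAt_S hx habsz
    have hmul := hC.mul hD
    have hzero : x * (1 - (z : ℂ)) ^ (x - 1) * (-1) * (∑' n : ℕ, g x n * (z : ℂ) ^ n)
        + (1 - (z : ℂ)) ^ x * ∑' n : ℕ, (n : ℂ) * g x n * (z : ℂ) ^ (n - 1) = 0 := by
      have hpow : (1 - (z : ℂ)) ^ x = (1 - (z : ℂ)) ^ (x - 1) * (1 - (z : ℂ)) := by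
        have : x = (x - 1) + 1 := by ring
        rw [this, Complex.cpow_add _ _ hne, Complex.cpow_one]
        ring_nf
      rw [hpow]
      linear_combination (1 - (z : ℂ)) ^ (x - 1) * (ode hx habsz)
    rw [hzero] at hmul
    exact hmul
  have hconst : Φ t = Φ 0 := by
    have hcont : ContinuousOn Φ (Set.Icc 0 t) := fun z hz =>
      ((key z hz.1 (lt_of_le_of_lt hz.2 h1)).continuousAt).continuousWithinAt
    have hder : ∀ z ∈ Set.Ico 0 t, HasDerivWithinAt Φ 0 (Set.Ici z) z := fun z hz =>
      (key z hz.1 (lt_of_lt_of_le hz.2 h1.le)).hasDerivWithinAt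
    exact constant_of_has_deriv_right_zero hcont hder t (Set.mem_Icc.mpr ⟨h0, le_refl t⟩)
  have hΦ0 : Φ 0 = 1 := by
    rw [hΦdef]
    simp only [Complex.ofReal_zero, sub_zero, Complex.one_cpow, one_mul]
    rw [tsum_eq_single 0 (fun n hn => by simp [zero_pow hn])]
    simp [g_zero]
  have hne : ((1 : ℂ) - (t : ℂ)) ≠ 0 := by
    intro hcon
    have : ((1 : ℂ) - (t : ℂ)).re = 0 := by rw [hcon]; simp
    simp [Complex.sub_re] at this
    linarith
  have hpowne : ((1 : ℂ) - (t : ℂ)) ^ x ≠ 0 := by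
    rw [Ne, Complex.cpow_eq_zero_iff]
    tauto
  have hval : (∑' n : ℕ, g x n * (t : ℂ) ^ n) = (1 - (t : ℂ)) ^ (-x) := by
    have h := hconst.trans hΦ0
    rw [hΦdef] at h
    simp only at h
    rw [Complex.cpow_neg]
    field_simp at h ⊢
    linear_combination h
  exact (Summable.hasSum_iff hS).mpr hval

noncomputable def Pr (σ : ℝ) (n : ℕ) : ℝ := ∏ j ∈ Finset.range n, (σ + j)
noncomputable def gR (σ : ℝ) (n : ℕ) : ℝ := Pr σ n / n.factorial

lemma Pr_pos {σ : ℝ} (hσ : 0 < σ) (n : ℕ) : 0 < Pr σ n :=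
  Finset.prod_pos fun j _ => by positivity

lemma gR_pos {σ : ℝ} (hσ : 0 < σ) (n : ℕ) : 0 < gR σ n := by
  have := Pr_pos hσ n
  have : (0:ℝ) < n.factorial := by positivity
  unfold gR
  have := Pr_pos hσ n
  positivity

lemma P_ofReal (σ : ℝ) (n : ℕ) : P ((σ : ℝ) : ℂ) n = ((Pr σ n : ℝ) : ℂ) := by
  rw [P, Pr, Complex.ofReal_prod]
  refine Finset.prod_congr rfl fun j _ => ?_
  push_cast
  ring

lemma g_ofReal (σ : ℝ) (n : ℕ) : g ((σ : ℝ) : ℂ) n = ((gR σ n : ℝ) : ℂ) := by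
  rw [g, gR, P_ofReal]
  push_cast
  ring

/-- comparison constant: `‖g x n‖ ≤ C · gR (re x) n`. -/
lemma norm_g_le {x : ℂ} (hσ : 0 < x.re) :
    ∃ C : ℝ, 0 < C ∧ ∀ n : ℕ, ‖g x n‖ ≤ C * gR x.re n := by
  set σ := x.re with hσdef
  set τ := x.im with hτdef
  have hsum : Summable (fun j : ℕ => τ ^ 2 / (2 * (σ + j) ^ 2)) := by
    set m := min σ 1 with hm
    have hm0 : 0 < m := lt_min hσ one_pos
    have hbase : Summable (fun j : ℕ => 1 / ((j : ℝ) + 1) ^ 2) := by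
      have h2 : Summable (fun j : ℕ => 1 / (j : ℝ) ^ 2) :=
        Real.summable_one_div_nat_pow.mpr one_lt_two
      have := (summable_nat_add_iff 1).mpr h2
      refine this.congr fun j => ?_
      push_cast
      ring_nf
    refine Summable.of_nonneg_of_le (fun j => by positivity) (fun j => ?_)
      (hbase.mul_left (τ ^ 2 / (2 * m ^ 2)))
    have hmj : m * ((j : ℝ) + 1) ≤ σ + j := by
      have h1 : m ≤ σ := min_le_left _ _
      have h2 : m ≤ 1 := min_le_right _ _
      have : (0:ℝ) ≤ j := Nat.cast_nonneg j
      nlinarith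
    have hmj0 : 0 < m * ((j : ℝ) + 1) := by positivity
    have hsq : (m * ((j : ℝ) + 1)) ^ 2 ≤ (σ + j) ^ 2 := by nlinarith
    have h1 : τ ^ 2 / (2 * (σ + j) ^ 2) ≤ τ ^ 2 / (2 * (m * ((j : ℝ) + 1)) ^ 2) := by
      apply div_le_div_of_nonneg_left (by positivity) (by positivity)
      nlinarith
    refine h1.trans (le_of_eq ?_)
    have hj1 : ((j : ℝ) + 1) ≠ 0 := by positivity
    field_simp
  set B := ∑' j : ℕ, τ ^ 2 / (2 * (σ + j) ^ 2) with hB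
  refine ⟨Real.exp B, Real.exp_pos B, fun n => ?_⟩
  have hfac : ∀ j : ℕ, ‖x + (j : ℂ)‖ ≤ (σ + j) * Real.exp (τ ^ 2 / (2 * (σ + j) ^ 2)) := by
    intro j
    have hu : (0:ℝ) < σ + j := by positivity
    have hnorm : ‖x + (j : ℂ)‖ ^ 2 = (σ + j) ^ 2 + τ ^ 2 := by
      rw [Complex.sq_norm, Complex.normSq_apply]
      simp only [Complex.add_re, Complex.add_im, Complex.natCast_re, Complex.natCast_im,
        add_zero]
      ring
    have hexp := Real.add_one_le_exp (τ ^ 2 / (σ + j) ^ 2)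
    have hdiv : (σ + j) ^ 2 * (τ ^ 2 / (σ + j) ^ 2) = τ ^ 2 := by field_simp
    have hexp2 : Real.exp (τ ^ 2 / (2 * (σ + j) ^ 2)) ^ 2 = Real.exp (τ ^ 2 / (σ + j) ^ 2) := by
      rw [← Real.exp_nat_mul]
      congr 1
      push_cast
      field_simp
    have hsq : ‖x + (j : ℂ)‖ ^ 2 ≤ ((σ + j) * Real.exp (τ ^ 2 / (2 * (σ + j) ^ 2))) ^ 2 := by
      rw [hnorm, mul_pow, hexp2]
      nlinarith
    have h1 : ‖x + (j : ℂ)‖ = Real.sqrt (‖x + (j : ℂ)‖ ^ 2) :=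
      (Real.sqrt_sq (norm_nonneg _)).symm
    rw [h1]
    have h2 : (σ + j) * Real.exp (τ ^ 2 / (2 * (σ + j) ^ 2))
        = Real.sqrt (((σ + j) * Real.exp (τ ^ 2 / (2 * (σ + j) ^ 2))) ^ 2) :=
      (Real.sqrt_sq (by positivity)).symm
    rw [h2]
    exact Real.sqrt_le_sqrt hsq
  have hsumle : (∑ j ∈ Finset.range n, τ ^ 2 / (2 * (σ + j) ^ 2)) ≤ B :=
    Summable.sum_le_tsum (Finset.range n) (fun j _ => by positivity) hsum
  have hP : ‖P x n‖ ≤ Pr σ n * Real.exp B := by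
    rw [norm_P]
    calc ∏ j ∈ Finset.range n, ‖x + (j : ℂ)‖
        ≤ ∏ j ∈ Finset.range n, (σ + j) * Real.exp (τ ^ 2 / (2 * (σ + j) ^ 2)) :=
          Finset.prod_le_prod (fun j _ => norm_nonneg _) (fun j _ => hfac j)
      _ = Pr σ n * Real.exp (∑ j ∈ Finset.range n, τ ^ 2 / (2 * (σ + j) ^ 2)) := by
          rw [Finset.prod_mul_distrib, Real.exp_sum, Pr]
      _ ≤ Pr σ n * Real.exp B := by
          apply mul_le_mul_of_nonneg_left (Real.exp_le_exp.mpr hsumle) (Pr_pos hσ n).le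
  have hfacpos : (0:ℝ) < n.factorial := by positivity
  rw [g, norm_div, Complex.norm_natCast, gR]
  rw [div_le_iff₀ hfacpos]  -- maybe div form
  calc ‖P x n‖ ≤ Pr σ n * Real.exp B := hP
    _ = Real.exp B * (Pr σ n / ↑n.factorial) * ↑n.factorial := by field_simp

lemma hasSum_binomial_real {σ : ℝ} (hσ : 0 < σ) {t : ℝ} (h0 : 0 ≤ t) (h1 : t < 1) :
    HasSum (fun n : ℕ => gR σ n * t ^ n) ((1 - t) ^ (-σ)) := by
  have hx : ∀ j : ℕ, ((σ : ℝ) : ℂ) + (j : ℂ) ≠ 0 := by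
    intro j hcon
    have hre : (((σ : ℝ) : ℂ) + (j : ℂ)).re = 0 := by rw [hcon]; simp
    simp only [Complex.add_re, Complex.ofReal_re, Complex.natCast_re] at hre
    have : (0:ℝ) < σ + j := by positivity
    linarith
  have h := (hasSum_binomial hx h0 h1).mapL Complex.reCLM
  have hterm : ∀ n : ℕ, Complex.reCLM (g ((σ : ℝ) : ℂ) n * ((t : ℝ) : ℂ) ^ n)
      = gR σ n * t ^ n := by
    intro n
    rw [g_ofReal, ← Complex.ofReal_pow, ← Complex.ofReal_mul]
    exact Complex.ofReal_re _
  have hval : Complex.reCLM ((1 - ((t : ℝ) : ℂ)) ^ (-((σ : ℝ) : ℂ))) = (1 - t) ^ (-σ) := by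
    have h1' : (1 - ((t : ℝ) : ℂ)) = (((1 - t : ℝ)) : ℂ) := by push_cast; ring
    have h2' : (-((σ : ℝ) : ℂ)) = (((-σ : ℝ)) : ℂ) := by push_cast; ring
    rw [h1', h2', ← Complex.ofReal_cpow (by linarith : (0:ℝ) ≤ 1 - t)]
    simp
  rw [← hval]
  exact h.congr_fun fun n => (hterm n).symm
  

lemma GammaSeq_eq (x : ℂ) (n : ℕ) :
    Complex.GammaSeq x n = (n : ℂ) ^ x * (n.factorial : ℂ) / P x (n + 1) := rfl

lemma cpow_nat_ne_zero {n : ℕ} (hn : n ≠ 0) (x : ℂ) : (n : ℂ) ^ x ≠ 0 := by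
  intro h
  rw [Complex.cpow_eq_zero_iff] at h
  exact (Nat.cast_ne_zero.mpr hn) h.1

lemma tendsto_Q {a b c s : ℂ} (hA : ∀ j : ℕ, a + j ≠ 0) (hB : ∀ j : ℕ, b + j ≠ 0)
    (hC : ∀ j : ℕ, c + j ≠ 0) (hS : ∀ j : ℕ, s + j ≠ 0)
    (hGa : Complex.Gamma a ≠ 0) (hGb : Complex.Gamma b ≠ 0)
    (habcs : a + b = c + s) :
    Tendsto (fun n : ℕ => P a n * P b n / (P c n * P s n)) atTop
      (nhds (Complex.Gamma c * Complex.Gamma s / (Complex.Gamma a * Complex.Gamma b))) := by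
  have key : ∀ n : ℕ, n ≠ 0 →
      P a (n + 1) * P b (n + 1) / (P c (n + 1) * P s (n + 1))
        = Complex.GammaSeq c n * Complex.GammaSeq s n
          / (Complex.GammaSeq a n * Complex.GammaSeq b n) := by
    intro n hn
    have hn0 : (n : ℂ) ≠ 0 := Nat.cast_ne_zero.mpr hn
    have hpow : (n : ℂ) ^ c * (n : ℂ) ^ s = (n : ℂ) ^ a * (n : ℂ) ^ b := by
      rw [← Complex.cpow_add _ _ hn0, ← Complex.cpow_add _ _ hn0, habcs]
    have hfac : ((n.factorial : ℕ) : ℂ) ≠ 0 := Nat.cast_ne_zero.mpr n.factorial_ne_zero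
    have hPa := P_ne_zero hA (n + 1)
    have hPb := P_ne_zero hB (n + 1)
    have hPc := P_ne_zero hC (n + 1)
    have hPs := P_ne_zero hS (n + 1)
    have hna := cpow_nat_ne_zero hn a
    have hnb := cpow_nat_ne_zero hn b
    have hnc := cpow_nat_ne_zero hn c
    have hns := cpow_nat_ne_zero hn s
    rw [GammaSeq_eq, GammaSeq_eq, GammaSeq_eq, GammaSeq_eq]
    field_simp
    linear_combination (-1 : ℂ) * hpow
  have h1 : Tendsto (fun n : ℕ => Complex.GammaSeq c n * Complex.GammaSeq s n
      / (Complex.GammaSeq a n * Complex.GammaSeq b n)) atTop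
      (nhds (Complex.Gamma c * Complex.Gamma s / (Complex.Gamma a * Complex.Gamma b))) :=
    ((Complex.GammaSeq_tendsto_Gamma c).mul (Complex.GammaSeq_tendsto_Gamma s)).div
      ((Complex.GammaSeq_tendsto_Gamma a).mul (Complex.GammaSeq_tendsto_Gamma b))
      (mul_ne_zero hGa hGb)
  have h2 : Tendsto (fun n : ℕ => P a (n + 1) * P b (n + 1) / (P c (n + 1) * P s (n + 1)))
      atTop (nhds (Complex.Gamma c * Complex.Gamma s
        / (Complex.Gamma a * Complex.Gamma b))) := by
    refine h1.congr' ?_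
    filter_upwards [eventually_gt_atTop 0] with n hn
    exact (key n hn.ne').symm
  exact (tendsto_add_atTop_iff_nat 1).mp h2

lemma core {s : ℂ} (hsre : 0 < s.re) {F : ℕ → ℂ}
    (hF : Tendsto F atTop (nhds (Complex.Gamma s))) :
    Tendsto (fun z : ℝ => (1 - (z : ℂ)) ^ s * ∑' n : ℕ, F n * g s n * (z : ℂ) ^ n)
      (nhdsWithin 1 (Set.Iio 1)) (nhds (Complex.Gamma s)) := by
  have hS : ∀ j : ℕ, s + (j : ℂ) ≠ 0 := by
    intro j hcon
    have hre : (s + (j : ℂ)).re = 0 := by rw [hcon]; simp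
    simp only [Complex.add_re, Complex.natCast_re] at hre
    nlinarith [Nat.cast_nonneg (α := ℝ) j]
  obtain ⟨C, hC0, hCle⟩ := norm_g_le hsre
  set σ := s.re with hσdef
  set L := Complex.Gamma s with hLdef
  have hFb : ∃ M : ℝ, 0 ≤ M ∧ ∀ n, ‖F n‖ ≤ M := by
    obtain ⟨M, hM⟩ := (hF.norm).bddAbove_range
    exact ⟨M, le_trans (norm_nonneg (F 0)) (hM ⟨0, rfl⟩), fun n => hM ⟨n, rfl⟩⟩
  obtain ⟨M, hM0, hMle⟩ := hFb
  rw [Metric.tendsto_nhds]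
  intro ε hε
  set ε₁ := ε / (2 * (C + 1)) with hε₁def
  have hε₁ : 0 < ε₁ := by rw [hε₁def]; positivity
  obtain ⟨N, hN⟩ := Metric.tendsto_atTop.mp hF ε₁ hε₁
  set M₀ := ∑ i ∈ Finset.range N, ‖(F i - L) * g s i‖ with hM₀def
  have hM₀0 : 0 ≤ M₀ := Finset.sum_nonneg fun i _ => norm_nonneg _
  have htend : Tendsto (fun z : ℝ => (1 - z) ^ σ * (M₀ + 1)) (nhdsWithin 1 (Set.Iio 1))
      (nhds 0) := by
    have h1 : Tendsto (fun z : ℝ => 1 - z) (nhdsWithin 1 (Set.Iio 1)) (nhds 0) := by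
      have hcont : Continuous (fun z : ℝ => 1 - z) := continuous_const.sub continuous_id
      have := (hcont.tendsto 1).mono_left (nhdsWithin_le_nhds (s := Set.Iio 1))
      simpa using this
    have h2 : ContinuousAt (fun u : ℝ => u ^ σ) 0 :=
      Real.continuousAt_rpow_const 0 σ (Or.inr hsre.le)
    have h3 := h2.tendsto.comp h1
    rw [Real.zero_rpow hsre.ne'] at h3
    have := h3.mul_const (M₀ + 1)
    simpa using this
  have hev1 : ∀ᶠ z : ℝ in nhdsWithin 1 (Set.Iio 1), z ∈ Set.Ioo (0 : ℝ) 1 :=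
    Ioo_mem_nhdsLT_of_mem (Set.mem_Ioc.mpr ⟨zero_lt_one, le_refl 1⟩)
  have hev2 : ∀ᶠ z : ℝ in nhdsWithin 1 (Set.Iio 1), (1 - z) ^ σ * (M₀ + 1) < ε / 2 :=
    htend.eventually_lt_const (by positivity)
  filter_upwards [hev1, hev2] with z hz hzsmall
  obtain ⟨hz0, hz1⟩ := hz
  have h1z : (0 : ℝ) < 1 - z := by linarith
  have hgsum : HasSum (fun n : ℕ => g s n * (z : ℂ) ^ n) ((1 - (z : ℂ)) ^ (-s)) :=
    hasSum_binomial hS hz0.le hz1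
  have hgRsum : HasSum (fun n : ℕ => gR σ n * z ^ n) ((1 - z) ^ (-σ)) :=
    hasSum_binomial_real hsre hz0.le hz1
  have hnormz : ∀ n : ℕ, ‖(z : ℂ) ^ n‖ = z ^ n := by
    intro n
    rw [norm_pow, Complex.norm_real, Real.norm_of_nonneg hz0.le]
  have hgRnn : ∀ n : ℕ, 0 ≤ gR σ n * z ^ n := fun n =>
    mul_nonneg (gR_pos hsre n).le (pow_nonneg hz0.le n)
  have hEbound : ∀ n : ℕ, ‖(F n - L) * g s n * (z : ℂ) ^ n‖
      ≤ (M + ‖L‖) * C * (gR σ n * z ^ n) := by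
    intro n
    rw [norm_mul, norm_mul, hnormz]
    have h1 : ‖F n - L‖ ≤ M + ‖L‖ := (norm_sub_le _ _).trans (by
      have := hMle n; linarith)
    have h2 : ‖g s n‖ ≤ C * gR σ n := hCle n
    have h3 : ‖F n - L‖ * ‖g s n‖ ≤ (M + ‖L‖) * (C * gR σ n) :=
      mul_le_mul h1 h2 (norm_nonneg _) (by positivity)
    have h4 := mul_le_mul_of_nonneg_right h3 (pow_nonneg hz0.le n)
    calc ‖F n - L‖ * ‖g s n‖ * z ^ n ≤ (M + ‖L‖) * (C * gR σ n) * z ^ n := h4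
      _ = (M + ‖L‖) * C * (gR σ n * z ^ n) := by ring
  have hEsum : Summable (fun n : ℕ => ‖(F n - L) * g s n * (z : ℂ) ^ n‖) :=
    Summable.of_nonneg_of_le (fun n => norm_nonneg _) hEbound
      ((hgRsum.summable).mul_left _)
  have hTsum : Summable (fun n : ℕ => F n * g s n * (z : ℂ) ^ n) := by
    refine Summable.of_norm (Summable.of_nonneg_of_le (fun n => norm_nonneg _) (fun n => ?_)
      ((hgRsum.summable).mul_left (M * C)))
    rw [norm_mul, norm_mul, hnormz]
    have h3 : ‖F n‖ * ‖g s n‖ ≤ M * (C * gR σ n) :=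
      mul_le_mul (hMle n) (hCle n) (norm_nonneg _) hM0
    have h4 := mul_le_mul_of_nonneg_right h3 (pow_nonneg hz0.le n)
    calc ‖F n‖ * ‖g s n‖ * z ^ n ≤ M * (C * gR σ n) * z ^ n := h4
      _ = M * C * (gR σ n * z ^ n) := by ring
  have hbase_ne : (1 - (z : ℂ)) ≠ 0 := by
    intro hcon
    have : (1 - (z : ℂ)).re = 0 := by rw [hcon]; simp
    simp only [Complex.sub_re, Complex.one_re, Complex.ofReal_re] at this
    linarith
  have hpowS : (1 - (z : ℂ)) ^ s ≠ 0 := by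
    rw [Ne, Complex.cpow_eq_zero_iff]
    tauto
  have hone : (1 - (z : ℂ)) ^ s * (1 - (z : ℂ)) ^ (-s) = 1 := by
    rw [Complex.cpow_neg]
    exact mul_inv_cancel₀ hpowS
  have hdiff : HasSum (fun n : ℕ => (F n - L) * g s n * (z : ℂ) ^ n)
      ((∑' n : ℕ, F n * g s n * (z : ℂ) ^ n) - L * (1 - (z : ℂ)) ^ (-s)) := by
    have h3 := hTsum.hasSum.sub (hgsum.mul_left L)
    exact h3.congr_fun fun n => by ring
  rw [dist_eq_norm]
  have hWeq : ‖(1 - (z : ℂ)) ^ s‖ = (1 - z) ^ σ := by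
    have hcast : (1 - (z : ℂ)) = (((1 - z : ℝ)) : ℂ) := by push_cast; ring
    rw [hcast, Complex.norm_cpow_eq_rpow_re_of_pos h1z]
  have heq : (1 - (z : ℂ)) ^ s * (∑' n : ℕ, F n * g s n * (z : ℂ) ^ n) - L
      = (1 - (z : ℂ)) ^ s * ((∑' n : ℕ, F n * g s n * (z : ℂ) ^ n)
          - L * (1 - (z : ℂ)) ^ (-s)) := by
    rw [mul_sub]
    have : (1 - (z : ℂ)) ^ s * (L * (1 - (z : ℂ)) ^ (-s))
        = L * ((1 - (z : ℂ)) ^ s * (1 - (z : ℂ)) ^ (-s)) := by ring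
    rw [this, hone, mul_one]
  rw [heq, norm_mul, hWeq, ← hdiff.tsum_eq]
  -- now bound the tsum of norms
  have hnorm_le : ‖∑' n : ℕ, (F n - L) * g s n * (z : ℂ) ^ n‖
      ≤ ∑' n : ℕ, ‖(F n - L) * g s n * (z : ℂ) ^ n‖ := norm_tsum_le_tsum_norm hEsum
  have hsplit : (∑ i ∈ Finset.range N, ‖(F i - L) * g s i * (z : ℂ) ^ i‖)
      + (∑' i : ℕ, ‖(F (i + N) - L) * g s (i + N) * (z : ℂ) ^ (i + N)‖)
      = ∑' n : ℕ, ‖(F n - L) * g s n * (z : ℂ) ^ n‖ :=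
    Summable.sum_add_tsum_nat_add N hEsum
  have hhead : (∑ i ∈ Finset.range N, ‖(F i - L) * g s i * (z : ℂ) ^ i‖) ≤ M₀ := by
    rw [hM₀def]
    refine Finset.sum_le_sum fun i _ => ?_
    rw [norm_mul, hnormz]
    calc ‖(F i - L) * g s i‖ * z ^ i ≤ ‖(F i - L) * g s i‖ * 1 :=
          mul_le_mul_of_nonneg_left (pow_le_one₀ hz0.le hz1.le) (norm_nonneg _)
      _ = ‖(F i - L) * g s i‖ := mul_one _
  have htailsum : Summable (fun i : ℕ => ‖(F (i + N) - L) * g s (i + N) * (z : ℂ) ^ (i + N)‖) :=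
    (summable_nat_add_iff N).mpr hEsum
  have hgRshift : Summable (fun i : ℕ => gR σ (i + N) * z ^ (i + N)) :=
    (summable_nat_add_iff N).mpr hgRsum.summable
  have htail : (∑' i : ℕ, ‖(F (i + N) - L) * g s (i + N) * (z : ℂ) ^ (i + N)‖)
      ≤ ε₁ * C * ((1 - z) ^ (-σ)) := by
    have hterm : ∀ i : ℕ, ‖(F (i + N) - L) * g s (i + N) * (z : ℂ) ^ (i + N)‖
        ≤ ε₁ * C * (gR σ (i + N) * z ^ (i + N)) := by
      intro i
      rw [norm_mul, norm_mul, hnormz]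
      have h1 : ‖F (i + N) - L‖ ≤ ε₁ := by
        have := hN (i + N) (Nat.le_add_left N i)
        rw [dist_eq_norm] at this
        exact this.le
      have h3 : ‖F (i + N) - L‖ * ‖g s (i + N)‖ ≤ ε₁ * (C * gR σ (i + N)) :=
        mul_le_mul h1 (hCle _) (norm_nonneg _) hε₁.le
      have h4 := mul_le_mul_of_nonneg_right h3 (pow_nonneg hz0.le (i + N))
      calc ‖F (i + N) - L‖ * ‖g s (i + N)‖ * z ^ (i + N)
          ≤ ε₁ * (C * gR σ (i + N)) * z ^ (i + N) := h4
        _ = ε₁ * C * (gR σ (i + N) * z ^ (i + N)) := by ring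
    have h5 : (∑' i : ℕ, ‖(F (i + N) - L) * g s (i + N) * (z : ℂ) ^ (i + N)‖)
        ≤ ∑' i : ℕ, ε₁ * C * (gR σ (i + N) * z ^ (i + N)) :=
      Summable.tsum_le_tsum hterm htailsum (hgRshift.mul_left (ε₁ * C))
    refine h5.trans ?_
    rw [tsum_mul_left]
    apply mul_le_mul_of_nonneg_left _ (by positivity : (0:ℝ) ≤ ε₁ * C)
    have hsplit2 : (∑ i ∈ Finset.range N, gR σ i * z ^ i)
        + (∑' i : ℕ, gR σ (i + N) * z ^ (i + N)) = ∑' n : ℕ, gR σ n * z ^ n :=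
      Summable.sum_add_tsum_nat_add N hgRsum.summable
    have hheadnn : 0 ≤ ∑ i ∈ Finset.range N, gR σ i * z ^ i :=
      Finset.sum_nonneg fun i _ => hgRnn i
    have := hgRsum.tsum_eq
    linarith
  -- put everything together
  have hrpow_pos : (0 : ℝ) < (1 - z) ^ σ := Real.rpow_pos_of_pos h1z σ
  have hrpow_cancel : (1 - z) ^ σ * (1 - z) ^ (-σ) = 1 := by
    rw [Real.rpow_neg h1z.le]
    exact mul_inv_cancel₀ hrpow_pos.ne'
  have hfinal : (1 - z) ^ σ * ‖∑' n : ℕ, (F n - L) * g s n * (z : ℂ) ^ n‖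
      ≤ (1 - z) ^ σ * M₀ + ε₁ * C := by
    have h6 : ‖∑' n : ℕ, (F n - L) * g s n * (z : ℂ) ^ n‖
        ≤ M₀ + ε₁ * C * ((1 - z) ^ (-σ)) := by
      rw [← hsplit] at hnorm_le
      linarith
    have h7 := mul_le_mul_of_nonneg_left h6 hrpow_pos.le
    calc (1 - z) ^ σ * ‖∑' n : ℕ, (F n - L) * g s n * (z : ℂ) ^ n‖
        ≤ (1 - z) ^ σ * (M₀ + ε₁ * C * ((1 - z) ^ (-σ))) := h7
      _ = (1 - z) ^ σ * M₀ + ε₁ * C * ((1 - z) ^ σ * (1 - z) ^ (-σ)) := by ring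
      _ = (1 - z) ^ σ * M₀ + ε₁ * C := by rw [hrpow_cancel]; ring
  have hlt1 : (1 - z) ^ σ * M₀ < ε / 2 := by
    have : (1 - z) ^ σ * M₀ ≤ (1 - z) ^ σ * (M₀ + 1) := by nlinarith
    linarith
  have hlt2 : ε₁ * C < ε / 2 := by
    rw [hε₁def]
    rw [div_mul_eq_mul_div, div_lt_div_iff₀ (by positivity) (by norm_num : (0:ℝ) < 2)]
    nlinarith
  calc (1 - z) ^ σ * ‖∑' n : ℕ, (F n - L) * g s n * (z : ℂ) ^ n‖
      ≤ (1 - z) ^ σ * M₀ + ε₁ * C := hfinal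
    _ < ε / 2 + ε / 2 := by linarith
    _ = ε := by ring

end H2F1

open H2F1

/-- Asymptotics of `₂F₁` near `z = 1`: if `Re(c-a-b) < 0` then
`(1-z)^{a+b-c} ₂F₁(a,b;c;z) → Γ(c)Γ(a+b-c)/(Γ(a)Γ(b))` as `z → 1⁻`. -/
theorem hyp2F1_asymptotic_near_one (a b c : ℂ)
    (h : (c - a - b).re < 0)
    (ha : ∀ n : ℕ, a ≠ -(n : ℂ)) (hb : ∀ n : ℕ, b ≠ -(n : ℂ)) (hc : ∀ n : ℕ, c ≠ -(n : ℂ)) :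
    Tendsto (fun z : ℝ => ((1 : ℂ) - (z : ℂ)) ^ (a + b - c) * hyp2F1 a b c z)
      (nhdsWithin 1 (Set.Iio 1))
      (nhds (Complex.Gamma c * Complex.Gamma (a + b - c) /
        (Complex.Gamma a * Complex.Gamma b))) := by
  set s := a + b - c with hsdef
  have hsre : 0 < s.re := by
    have h1 : s = -(c - a - b) := by rw [hsdef]; ring
    rw [h1, Complex.neg_re]
    linarith
  have hA := add_nat_ne_zero ha
  have hB := add_nat_ne_zero hb
  have hC := add_nat_ne_zero hc
  have hS : ∀ j : ℕ, s + (j : ℂ) ≠ 0 := by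
    intro j hcon
    have hre : (s + (j : ℂ)).re = 0 := by rw [hcon]; simp
    simp only [Complex.add_re, Complex.natCast_re] at hre
    nlinarith [Nat.cast_nonneg (α := ℝ) j]
  have hGa : Complex.Gamma a ≠ 0 := Complex.Gamma_ne_zero ha
  have hGb : Complex.Gamma b ≠ 0 := Complex.Gamma_ne_zero hb
  have hGc : Complex.Gamma c ≠ 0 := Complex.Gamma_ne_zero hc
  have habcs : a + b = c + s := by rw [hsdef]; ring
  set F : ℕ → ℂ := fun n => (Complex.Gamma a * Complex.Gamma b / Complex.Gamma c) *
    (P a n * P b n / (P c n * P s n)) with hFdef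
  have hFt : Tendsto F atTop (nhds (Complex.Gamma s)) := by
    have h1 := (tendsto_Q hA hB hC hS hGa hGb habcs).const_mul
      (Complex.Gamma a * Complex.Gamma b / Complex.Gamma c)
    have hval : (Complex.Gamma a * Complex.Gamma b / Complex.Gamma c) *
        (Complex.Gamma c * Complex.Gamma s / (Complex.Gamma a * Complex.Gamma b))
        = Complex.Gamma s := by
      field_simp
    rw [hval] at h1
    exact h1
  have hterm : ∀ n : ℕ, Complex.Gamma (a + n) * Complex.Gamma (b + n) /
      (Complex.Gamma (c + n) * (n.factorial : ℂ)) = F n * g s n := by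
    intro n
    rw [Gamma_add_nat ha, Gamma_add_nat hb, Gamma_add_nat hc, hFdef, g]
    have h1 := P_ne_zero hC n
    have h2 := P_ne_zero hS n
    have h3 : ((n.factorial : ℕ) : ℂ) ≠ 0 := Nat.cast_ne_zero.mpr n.factorial_ne_zero
    field_simp
  have hcore := (core hsre hFt).const_mul
    (Complex.Gamma c / (Complex.Gamma a * Complex.Gamma b))
  have hval2 : (Complex.Gamma c / (Complex.Gamma a * Complex.Gamma b)) * Complex.Gamma s
      = Complex.Gamma c * Complex.Gamma s / (Complex.Gamma a * Complex.Gamma b) := by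
    ring
  rw [hval2] at hcore
  refine hcore.congr fun z => ?_
  rw [hyp2F1]
  have hsum_eq : (∑' n : ℕ, Complex.Gamma (a + n) * Complex.Gamma (b + n) /
      (Complex.Gamma (c + n) * (n.factorial : ℂ)) * ((z : ℂ)) ^ n)
      = ∑' n : ℕ, F n * g s n * (z : ℂ) ^ n :=
    tsum_congr fun n => by rw [hterm n]
  rw [hsum_eq]
  ring
end
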